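/- Let T > 0, m ≥ 1 an integer, X := L²((0,T);ℝ^m) × ℝ^m with the product Hilbert space structure, and let A : X → X be a continuous linear map with ⟨A z, z⟩_X ≥ 0 for all z ∈ X; write A(h,k) = (A₁(h,k), A₂(h,k)) ∈ L²((0,T);ℝ^m) × ℝ^m. Let γ > 0, κ > 0 and let E₁,…,E_m ⊆ (0,T) be Lebesgue-measurable sets. Then the bounded linear operator D : X → X defined by D(h,k) = ((hᵢ + γ⁻¹·𝟙_{Eᵢ}·(A₁(h,k))ᵢ)_{i=1}^m, (κ/γ)k + γ⁻¹·A₂(h,k)) is injective. -/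

import Mathlib

open MeasureTheory RealInnerProductSpace

set_option maxHeartbeats 800000

/-- The product Hilbert space `L²((0,T);ℝ^m) × ℝ^m`. -/
abbrev Xsp (T : ℝ) (m : ℕ) :=
  Lp (EuclideanSpace ℝ (Fin m)) 2 (volume.restrict (Set.Ioo 0 T)) × EuclideanSpace ℝ (Fin m)

/-- Injectivity of the Newton derivative `D = DF_γ(v,c)` in the case `κ > 0`. -/
theorem newton_derivative_injective_kappa_pos
    (T : ℝ) (hT : 0 < T) (m : ℕ) (hm : 1 ≤ m)
    (A : Xsp T m →L[ℝ] Xsp T m)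
    (hA : ∀ z : Xsp T m, 0 ≤ ⟪(A z).1, z.1⟫ + ⟪(A z).2, z.2⟫)
    (γ κ : ℝ) (hγ : 0 < γ) (hκ : 0 < κ)
    (E : Fin m → Set ℝ) (hEm : ∀ i, MeasurableSet (E i)) (hEs : ∀ i, E i ⊆ Set.Ioo 0 T)
    (D : Xsp T m →L[ℝ] Xsp T m)
    (hD1 : ∀ z : Xsp T m, ∀ᵐ t ∂(volume.restrict (Set.Ioo 0 T)), ∀ i,
      (D z).1 t i = z.1 t i + γ⁻¹ * (E i).indicator (fun _ => (1 : ℝ)) t * (A z).1 t i)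
    (hD2 : ∀ z : Xsp T m, (D z).2 = (κ / γ) • z.2 + γ⁻¹ • (A z).2) :
    Function.Injective D := by
  set μ := volume.restrict (Set.Ioo 0 T) with hμ
  have key : ∀ z : Xsp T m, D z = 0 → z = 0 := by
    intro z hz
    -- second component
    have h2 : (A z).2 = (-κ) • z.2 := by
      have h := hD2 z
      rw [hz] at h
      have h' : (κ / γ) • z.2 + γ⁻¹ • (A z).2 = 0 := h.symm
      have h'' : γ⁻¹ • (A z).2 = -((κ / γ) • z.2) :=
        eq_neg_of_add_eq_zero_right h'
      have := congrArg (fun v : EuclideanSpace ℝ (Fin m) => γ • v) h''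
      simp only [smul_neg, smul_smul] at this
      rw [mul_inv_cancel₀ hγ.ne', one_smul] at this
      rw [this]
      rw [← neg_smul]
      congr 1
      field_simp
    have hinner2 : ⟪(A z).2, z.2⟫ = -κ * ‖z.2‖ ^ 2 := by
      rw [h2, real_inner_smul_left, real_inner_self_eq_norm_sq]
    -- first component: a.e. identity
    have hz1 : (D z).1 = 0 := by rw [hz]; rfl
    have hcz : ⇑(D z).1 =ᵐ[μ] 0 := by
      rw [hz1]; exact Lp.coeFn_zero _ _ _
    have hae : ∀ᵐ t ∂μ, ⟪z.1 t, (A z).1 t⟫ = -γ * ⟪z.1 t, z.1 t⟫ := by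
      filter_upwards [hD1 z, hcz] with t ht h0
      have hcoord : ∀ i, z.1 t i * (A z).1 t i = -γ * (z.1 t i * z.1 t i) := by
        intro i
        have hti := ht i
        rw [show (D z).1 t i = 0 by rw [h0]; simp] at hti
        by_cases hmem : t ∈ E i
        · rw [Set.indicator_of_mem hmem] at hti
          have ha : (A z).1 t i = -γ * z.1 t i := by
            field_simp at hti ⊢
            nlinarith [hti]
          rw [ha]; ring
        · rw [Set.indicator_of_notMem hmem] at hti
          have : z.1 t i = 0 := by linarith [hti]
          rw [this]; ring
      simp only [PiLp.inner_apply, RCLike.inner_apply, starRingEnd_apply, star_trivial]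
      rw [Finset.mul_sum]; exact Finset.sum_congr rfl fun i _ => (mul_comm _ _).trans (hcoord i)
    -- inner product in L2
    have hinner1 : ⟪(A z).1, z.1⟫ = -γ * ‖z.1‖ ^ 2 := by
      rw [real_inner_comm, ← real_inner_self_eq_norm_sq]
      rw [L2.inner_def, L2.inner_def]
      rw [integral_congr_ae hae, integral_const_mul]
    have hA' := hA z
    rw [hinner1, hinner2] at hA'
    have hq1 : ‖z.1‖ ^ 2 = 0 := by nlinarith [sq_nonneg ‖z.1‖, sq_nonneg ‖z.2‖]
    have hq2 : ‖z.2‖ ^ 2 = 0 := by nlinarith [sq_nonneg ‖z.1‖, sq_nonneg ‖z.2‖]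
    have hn1 : ‖z.1‖ = 0 := by nlinarith [norm_nonneg z.1, hq1]
    have hn2 : ‖z.2‖ = 0 := by nlinarith [norm_nonneg z.2, hq2]
    have e1 : z.1 = 0 := norm_eq_zero.mp hn1
    have e2 : z.2 = 0 := norm_eq_zero.mp hn2
    exact Prod.ext e1 e2
  intro a b hab
  have : D (a - b) = 0 := by rw [map_sub, hab, sub_self]
  exact sub_eq_zero.mp (key _ this)
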